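/- Let Λ₁, …, Λ_s be full-rank sublattices of a full-rank lattice Λ ⊂ ℝⁿ, and let Λ̄ = ⋂_{i=1}^{s} Λ_i. Then max_{1≤i≤s} det Λ_i ≤ det Λ̄ ≤ (det Λ)^{1−s} · det Λ₁ ⋯ det Λ_s. -/

import Mathlib

open MeasureTheory Set Pointwise

/-- The lattice generated by the vectors `b`. -/
noncomputable def lat {n : ℕ} (b : Fin n → (Fin n → ℝ)) : Set (Fin n → ℝ) :=
  (Submodule.span ℤ (Set.range b) : Submodule ℤ (Fin n → ℝ))

/-- The determinant (covolume) of the lattice with basis `b`. -/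
noncomputable def latDet {n : ℕ} (b : Fin n → (Fin n → ℝ)) : ℝ :=
  |(Matrix.of b).det|

/-- A compact convex `o`-symmetric body with nonempty interior. -/
def IsBody {n : ℕ} (K : Set (Fin n → ℝ)) : Prop :=
  IsCompact K ∧ Convex ℝ K ∧ K = -K ∧ (interior K).Nonempty

/-- First successive minimum of `K` w.r.t. the point set `S`. -/
noncomputable def lambda1 {n : ℕ} (K S : Set (Fin n → ℝ)) : ℝ :=
  sInf {l : ℝ | 0 ≤ l ∧ ∃ x ∈ S, x ≠ 0 ∧ x ∈ l • K}

/-- First restricted successive minimum: smallest `l ≥ 0` with `l • K ∩ S ≠ ∅`. -/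
noncomputable def lambdaRes {n : ℕ} (K S : Set (Fin n → ℝ)) : ℝ :=
  sInf {l : ℝ | 0 ≤ l ∧ (l • K ∩ S).Nonempty}

/-- `i`-th successive minimum of `K` w.r.t. the point set `S`. -/
noncomputable def lambdaI {n : ℕ} (i : ℕ) (K S : Set (Fin n → ℝ)) : ℝ :=
  sInf {l : ℝ | 0 ≤ l ∧ i ≤ Module.finrank ℝ (Submodule.span ℝ (l • K ∩ S))}

/-- The (half-open) fundamental parallelepiped of the basis `b`. -/
noncomputable def fundPar {n : ℕ} (b : Fin n → (Fin n → ℝ)) : Set (Fin n → ℝ) :=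
  {x | ∃ ρ : Fin n → ℝ, (∀ i, 0 ≤ ρ i ∧ ρ i < 1) ∧ x = ∑ i, ρ i • b i}

/-- The covering radius of `K` with respect to the point set `L`. -/
noncomputable def covRadius {n : ℕ} (K L : Set (Fin n → ℝ)) : ℝ :=
  sInf {μ : ℝ | 0 < μ ∧ ∀ t : Fin n → ℝ, (({t} + μ • K) ∩ L).Nonempty}



lemma index_span_rows {n : ℕ} (A : Fin n → (Fin n → ℤ)) (hA : LinearIndependent ℤ A) :
    (Submodule.span ℤ (Set.range A)).toAddSubgroup.index = (Matrix.of A).det.natAbs := by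
  classical
  set N : Submodule ℤ (Fin n → ℤ) := Submodule.span ℤ (Set.range A) with hN
  let wB : Module.Basis (Fin n) ℤ N := Module.Basis.span hA
  obtain ⟨m, snf⟩ := N.smithNormalForm (Pi.basisFun ℤ (Fin n))
  have hmn : m = n := by
    have := Fintype.card_congr (wB.indexEquiv snf.bN)
    simpa using this.symm
  subst hmn
  obtain ⟨bM, bN, femb, a, hsnf⟩ := snf
  let e : Fin m ≃ Fin m := Equiv.ofBijective femb (Finite.injective_iff_bijective.mp femb.injective)
  have he : ∀ i, femb i = e i := fun i => rfl
  -- membership characterization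
  have key : ∀ x : Fin m → ℤ, x ∈ N ↔ ∀ j, a (e.symm j) ∣ bM.repr x j := by
    intro x
    constructor
    · intro hx
      rw [bN.mem_submodule_iff'] at hx
      obtain ⟨c, rfl⟩ := hx
      intro j
      have hsum : (∑ i, c i • (bN i : Fin m → ℤ)) =
          ∑ j', (c (e.symm j') * a (e.symm j')) • bM j' := by
        rw [← Equiv.sum_comp e (fun j' => (c (e.symm j') * a (e.symm j')) • bM j')]
        refine Finset.sum_congr rfl fun i _ => ?_
        simp [hsnf i, he i, smul_smul, mul_assoc]
      rw [hsum, bM.repr_sum_self]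
      exact Dvd.intro_left _ rfl
    · intro h
      choose k hk using h
      have hmem : (∑ i, (k (femb i)) • (bN i : Fin m → ℤ)) ∈ N :=
        Submodule.sum_mem _ fun i _ => Submodule.smul_mem _ _ (SetLike.coe_mem _)
      have hx : x = ∑ i, (k (femb i)) • (bN i : Fin m → ℤ) := by
        apply bM.ext_elem
        intro j
        have hsum : (∑ i, (k (femb i)) • (bN i : Fin m → ℤ)) =
            ∑ j', (k j' * a (e.symm j')) • bM j' := by
          rw [← Equiv.sum_comp e (fun j' => (k j' * a (e.symm j')) • bM j')]
          refine Finset.sum_congr rfl fun i _ => ?_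
          simp [hsnf i, he i, smul_smul, mul_assoc]
        rw [hsum, bM.repr_sum_self, hk j, mul_comm]
      rw [hx]; exact hmem
  -- index computation
  have hNadd : N.toAddSubgroup = AddSubgroup.comap bM.equivFun.toLinearMap.toAddMonoidHom
      (AddSubgroup.pi Set.univ fun j => AddSubgroup.zmultiples (a (e.symm j))) := by
    ext x
    simp only [Submodule.mem_toAddSubgroup, AddSubgroup.mem_comap, AddSubgroup.mem_pi,
      Set.mem_univ, forall_true_left, Int.mem_zmultiples_iff, key x,
      LinearMap.toAddMonoidHom_coe, LinearEquiv.coe_coe, Module.Basis.equivFun_apply]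
  have hidx : N.toAddSubgroup.index = ∏ i, (a i).natAbs := by
    rw [hNadd, AddSubgroup.index_comap_of_surjective _ bM.equivFun.surjective,
      AddSubgroup.index_pi]
    simp only [Int.index_zmultiples]
    exact Equiv.prod_comp e.symm (fun i => (a i).natAbs)
  -- determinant computation
  let C' : Matrix (Fin m) (Fin m) ℤ := Matrix.of fun i j => (bN.repr (wB i)) j
  let G : Matrix (Fin m) (Fin m) ℤ := Matrix.of fun j k => bM (e j) k
  have hfact : Matrix.of A = C' * (Matrix.diagonal a * G) := by
    ext i k'
    have h0 : A i = (wB i : Fin m → ℤ) := congrArg Subtype.val (Module.Basis.span_apply hA i).symm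
    have h1 : (wB i : Fin m → ℤ) = ∑ j, (bN.repr (wB i)) j • (bN j : Fin m → ℤ) := by
      conv_lhs => rw [← bN.sum_repr (wB i)]
      simp only [Submodule.coe_sum, Submodule.coe_smul]
    have h2 : ∀ j k'', (bN j : Fin m → ℤ) k'' = a j * bM (e j) k'' := by
      intro j k''
      rw [hsnf j, he j]
      simp
    calc Matrix.of A i k' = A i k' := rfl
      _ = ∑ j, (bN.repr (wB i)) j * (a j * bM (e j) k') := by
          rw [h0, h1]
          simp only [Finset.sum_apply, Pi.smul_apply, smul_eq_mul]
          exact Finset.sum_congr rfl fun j _ => by rw [h2 j k']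
      _ = (C' * (Matrix.diagonal a * G)) i k' := by
          rw [Matrix.mul_apply]
          exact Finset.sum_congr rfl fun j _ => by rw [Matrix.diagonal_mul]; rfl
  have hdetC : C'.det.natAbs = 1 := by
    have hCt : C' = (bN.toMatrix wB).transpose := by
      ext i j
      simp [C', Module.Basis.toMatrix_apply, Matrix.transpose_apply]
    have : Invertible (bN.toMatrix wB) := bN.invertibleToMatrix wB
    have hu : IsUnit (bN.toMatrix wB).det := (Matrix.isUnit_iff_isUnit_det _).mp
      (isUnit_of_invertible _)
    rw [hCt, Matrix.det_transpose]
    exact Int.isUnit_iff_natAbs_eq.mp hu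
  have hdetG : G.det.natAbs = 1 := by
    have hGt : G = ((Pi.basisFun ℤ (Fin m)).toMatrix (bM.reindex e.symm)).transpose := by
      ext j k
      simp [G, Module.Basis.toMatrix_apply, Matrix.transpose_apply, Pi.basisFun_repr,
        Module.Basis.reindex_apply]
    have : Invertible ((Pi.basisFun ℤ (Fin m)).toMatrix (bM.reindex e.symm)) :=
      (Pi.basisFun ℤ (Fin m)).invertibleToMatrix (bM.reindex e.symm)
    have hu : IsUnit ((Pi.basisFun ℤ (Fin m)).toMatrix (bM.reindex e.symm)).det :=
      (Matrix.isUnit_iff_isUnit_det _).mp (isUnit_of_invertible _)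
    rw [hGt, Matrix.det_transpose]
    exact Int.isUnit_iff_natAbs_eq.mp hu
  have hdet : (Matrix.of A).det.natAbs = ∏ i, (a i).natAbs := by
    rw [hfact, Matrix.det_mul, Matrix.det_mul, Matrix.det_diagonal,
      Int.natAbs_mul, Int.natAbs_mul, hdetC, hdetG]
    rw [show ((∏ i, a i).natAbs) = ∏ i, (a i).natAbs from map_prod Int.natAbsHom a Finset.univ]
    ring
  rw [hidx, hdet]

section Aux

lemma li_int {n : ℕ} {v : Fin n → Fin n → ℝ} (hv : LinearIndependent ℝ v) :
    LinearIndependent ℤ v := by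
  refine hv.restrict_scalars ?_
  intro r r' h
  have : (r : ℝ) = (r' : ℝ) := by simpa using h
  exact_mod_cast this

lemma det_ne_zero_of_li {n : ℕ} {v : Fin n → Fin n → ℝ} (hv : LinearIndependent ℝ v) :
    (Matrix.of v).det ≠ 0 := by
  have hu : IsUnit (Matrix.of v) := Matrix.linearIndependent_rows_iff_isUnit.mp hv
  exact ((Matrix.isUnit_iff_isUnit_det _).mp hu).ne_zero

lemma exists_int_matrix {n : ℕ} {u v : Fin n → Fin n → ℝ}
    (h : ∀ j, v j ∈ Submodule.span ℤ (Set.range u)) :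
    ∃ T : Fin n → Fin n → ℤ, ∀ j, v j = ∑ k, T j k • u k := by
  choose T hT using fun j => (Submodule.mem_span_range_iff_exists_fun ℤ).mp (h j)
  exact ⟨T, fun j => (hT j).symm⟩

lemma latDet_factor {n : ℕ} {u v : Fin n → Fin n → ℝ} {T : Fin n → Fin n → ℤ}
    (hT : ∀ j, v j = ∑ k, T j k • u k) :
    latDet v = ((Matrix.of T).det.natAbs : ℝ) * latDet u := by
  have hmat : Matrix.of v = (Matrix.of T).map (fun z : ℤ => (z : ℝ)) * Matrix.of u := by
    ext j k
    simp only [Matrix.mul_apply, Matrix.map_apply, Matrix.of_apply]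
    rw [hT j]
    simp [Finset.sum_apply, Pi.smul_apply, zsmul_eq_mul]
  unfold latDet
  rw [hmat, Matrix.det_mul, abs_mul]
  congr 1
  have hd : ((Matrix.of T).map (fun z : ℤ => (z : ℝ))).det = (((Matrix.of T).det : ℤ) : ℝ) :=
    (RingHom.map_det (Int.castRingHom ℝ) (Matrix.of T)).symm
  rw [hd, Nat.cast_natAbs, Int.cast_abs]

lemma latDet_le_of_span_le {n : ℕ} {u v : Fin n → Fin n → ℝ} (hv : LinearIndependent ℝ v)
    (h : ∀ j, v j ∈ Submodule.span ℤ (Set.range u)) : latDet u ≤ latDet v := by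
  obtain ⟨T, hT⟩ := exists_int_matrix h
  have hfac : latDet v = ((Matrix.of T).det.natAbs : ℝ) * latDet u := latDet_factor hT
  have hv0 : latDet v ≠ 0 := by
    unfold latDet
    exact abs_ne_zero.mpr (det_ne_zero_of_li hv)
  have hT0 : (Matrix.of T).det.natAbs ≠ 0 := by
    intro h0
    rw [hfac, h0] at hv0
    simp at hv0
  have h1 : (1 : ℝ) ≤ ((Matrix.of T).det.natAbs : ℝ) := by
    exact_mod_cast Nat.one_le_iff_ne_zero.mpr hT0
  calc latDet u = 1 * latDet u := (one_mul _).symm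
    _ ≤ ((Matrix.of T).det.natAbs : ℝ) * latDet u := by
        apply mul_le_mul_of_nonneg_right h1
        exact abs_nonneg _
    _ = latDet v := hfac.symm

noncomputable def coordMap {n : ℕ} (b : Fin n → Fin n → ℝ) : (Fin n → ℤ) →ₗ[ℤ] (Fin n → ℝ) where
  toFun v := ∑ k, v k • b k
  map_add' x y := by
    simp only [Pi.add_apply, add_smul]
    rw [Finset.sum_add_distrib]
  map_smul' m x := by
    simp only [Pi.smul_apply, smul_eq_mul, RingHom.id_apply]
    rw [Finset.smul_sum]
    exact Finset.sum_congr rfl fun k _ => by rw [mul_smul]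

lemma coordMap_injective {n : ℕ} {b : Fin n → Fin n → ℝ} (hb : LinearIndependent ℝ b) :
    Function.Injective (coordMap b) := by
  intro x y hxy
  have h0 : coordMap b (x - y) = 0 := by rw [map_sub, hxy, sub_self]
  have h1 := Fintype.linearIndependent_iff.mp (li_int hb) (x - y) h0
  funext k
  exact sub_eq_zero.mp (h1 k)

end Aux

/-- bounds on the determinant of the intersection of full-rank
sublattices. -/
theorem stmt1 {n s : ℕ} (b cbar : Fin n → (Fin n → ℝ)) (c : Fin s → Fin n → (Fin n → ℝ))
    (hb : LinearIndependent ℝ b) (hc : ∀ i, LinearIndependent ℝ (c i))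
    (hsub : ∀ i, lat (c i) ⊆ lat b)
    (hcbar : LinearIndependent ℝ cbar)
    (hbar : lat cbar = ⋂ i, lat (c i)) :
    (∀ i, latDet (c i) ≤ latDet cbar) ∧
      latDet cbar ≤ latDet b ^ (1 - (s : ℤ)) * ∏ i, latDet (c i) := by
  classical
  have hbarS : Submodule.span ℤ (Set.range cbar) = ⨅ i, Submodule.span ℤ (Set.range (c i)) := by
    apply SetLike.coe_injective
    rw [Submodule.coe_iInf]
    exact hbar
  have hsubM : ∀ i, Submodule.span ℤ (Set.range (c i)) ≤ Submodule.span ℤ (Set.range b) :=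
    fun i x hx => hsub i hx
  have hdetb : (Matrix.of b).det ≠ 0 := det_ne_zero_of_li hb
  constructor
  · intro i
    apply latDet_le_of_span_le hcbar
    intro j
    have h1 : cbar j ∈ Submodule.span ℤ (Set.range cbar) := Submodule.subset_span ⟨j, rfl⟩
    rw [hbarS] at h1
    exact (Submodule.mem_iInf _).mp h1 i
  · rcases Nat.eq_zero_or_pos s with hs | hs
    · subst hs
      have hble : latDet cbar ≤ latDet b := by
        apply latDet_le_of_span_le hb
        intro j
        rw [hbarS]
        exact (Submodule.mem_iInf _).mpr fun i => i.elim0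
      simpa using hble
    · have i0 : Fin s := ⟨0, hs⟩
      have hcb : ∀ j, cbar j ∈ Submodule.span ℤ (Set.range b) := by
        intro j
        have h1 : cbar j ∈ Submodule.span ℤ (Set.range cbar) := Submodule.subset_span ⟨j, rfl⟩
        rw [hbarS] at h1
        exact hsubM i0 ((Submodule.mem_iInf _).mp h1 i0)
      obtain ⟨Mm, hMm⟩ := exists_int_matrix hcb
      have hUex : ∀ i, ∃ T : Fin n → Fin n → ℤ, ∀ j, c i j = ∑ k, T j k • b k :=
        fun i => exists_int_matrix (fun j => hsubM i (Submodule.subset_span ⟨j, rfl⟩))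
      choose U hU using hUex
      have hinj : Function.Injective (coordMap b) := coordMap_injective hb
      have happ : ∀ (T : Fin n → Fin n → ℤ) j, coordMap b (T j) = ∑ k, T j k • b k :=
        fun T j => rfl
      have hmapU : ∀ i, Submodule.map (coordMap b) (Submodule.span ℤ (Set.range (U i))) =
          Submodule.span ℤ (Set.range (c i)) := by
        intro i
        rw [Submodule.map_span, ← Set.range_comp]
        congr 1
        exact congrArg _ (funext fun j => by rw [Function.comp_apply, happ, ← hU i j])
      have hmapM : Submodule.map (coordMap b) (Submodule.span ℤ (Set.range Mm)) =
          Submodule.span ℤ (Set.range cbar) := by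
        rw [Submodule.map_span, ← Set.range_comp]
        congr 1
        exact congrArg _ (funext fun j => by rw [Function.comp_apply, happ, ← hMm j])
      have hspanM : Submodule.span ℤ (Set.range Mm) = ⨅ i, Submodule.span ℤ (Set.range (U i)) := by
        have h1 : Submodule.map (coordMap b) (Submodule.span ℤ (Set.range Mm)) =
            ⨅ i, Submodule.map (coordMap b) (Submodule.span ℤ (Set.range (U i))) := by
          rw [hmapM, hbarS]
          exact iInf_congr fun i => (hmapU i).symm
        have h2 := congrArg (Submodule.comap (coordMap b)) h1
        rwa [Submodule.comap_map_eq_of_injective hinj,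
          Submodule.comap_iInf_map_of_injective hinj] at h2
      have hliM : LinearIndependent ℤ Mm := by
        have h1 : LinearIndependent ℤ (⇑(coordMap b) ∘ Mm) := by
          have : ⇑(coordMap b) ∘ Mm = cbar := funext fun j => by
            rw [Function.comp_apply, happ, ← hMm j]
          rw [this]
          exact li_int hcbar
        exact LinearIndependent.of_comp (coordMap b) h1
      have hliU : ∀ i, LinearIndependent ℤ (U i) := by
        intro i
        have h1 : LinearIndependent ℤ (⇑(coordMap b) ∘ (U i)) := by
          have : ⇑(coordMap b) ∘ (U i) = c i := funext fun j => by
            rw [Function.comp_apply, happ, ← hU i j]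
          rw [this]
          exact li_int (hc i)
        exact LinearIndependent.of_comp (coordMap b) h1
      have hidx : (Matrix.of Mm).det.natAbs ≤ ∏ i, (Matrix.of (U i)).det.natAbs := by
        rw [← index_span_rows Mm hliM]
        have hEq : (Submodule.span ℤ (Set.range Mm)).toAddSubgroup =
            ⨅ i, (Submodule.span ℤ (Set.range (U i))).toAddSubgroup := by
          rw [hspanM]
          ext x
          simp [Submodule.mem_toAddSubgroup, Submodule.mem_iInf, AddSubgroup.mem_iInf]
        rw [hEq]
        calc (⨅ i, (Submodule.span ℤ (Set.range (U i))).toAddSubgroup).index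
            ≤ ∏ i, (Submodule.span ℤ (Set.range (U i))).toAddSubgroup.index :=
              AddSubgroup.index_iInf_le _
          _ = ∏ i, (Matrix.of (U i)).det.natAbs :=
              Finset.prod_congr rfl fun i _ => index_span_rows (U i) (hliU i)
      have hDpos : 0 < latDet b := by
        unfold latDet
        exact abs_pos.mpr hdetb
      have hcbarEq : latDet cbar = ((Matrix.of Mm).det.natAbs : ℝ) * latDet b :=
        latDet_factor hMm
      have hciEq : ∀ i, latDet (c i) = ((Matrix.of (U i)).det.natAbs : ℝ) * latDet b :=
        fun i => latDet_factor (hU i)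
      have hprod : ∏ i, latDet (c i) = (∏ i, ((Matrix.of (U i)).det.natAbs : ℝ)) * latDet b ^ s := by
        rw [Finset.prod_congr rfl fun i _ => hciEq i, Finset.prod_mul_distrib,
          Finset.prod_const, Finset.card_univ, Fintype.card_fin]
      have hzp : latDet b ^ (1 - (s : ℤ)) * latDet b ^ s = latDet b := by
        rw [← zpow_natCast (latDet b) s, ← zpow_add₀ hDpos.ne']
        simp
      rw [hcbarEq, hprod]
      calc ((Matrix.of Mm).det.natAbs : ℝ) * latDet b
          ≤ (∏ i, ((Matrix.of (U i)).det.natAbs : ℝ)) * latDet b := by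
            apply mul_le_mul_of_nonneg_right _ hDpos.le
            rw [← Nat.cast_prod]
            exact_mod_cast hidx
        _ = latDet b ^ (1 - (s : ℤ)) * ((∏ i, ((Matrix.of (U i)).det.natAbs : ℝ)) * latDet b ^ s) := by
            rw [show latDet b ^ (1 - (s : ℤ)) * ((∏ i, ((Matrix.of (U i)).det.natAbs : ℝ)) * latDet b ^ s)
              = (∏ i, ((Matrix.of (U i)).det.natAbs : ℝ)) * (latDet b ^ (1 - (s : ℤ)) * latDet b ^ s) by ring,
              hzp]
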